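/- arXiv:1307.6206 — 2 statements merged into one kernel-verified Lean document; each statement's English description precedes it below -/
import Mathlib

section
/- Let (R,m) be a one-dimensional Noetherian reduced local ring with finitely generated integral closure S, and let x be a minimal reduction of m. Then xS = mS. In particular mS is a principal ideal of S. -/
open IsLocalRing

open Polynomial in
/-- Determinant trick: if `t` multiplies a f.g. `R`-submodule `N` of an `R`-algebra `A`
into itself, and `N` contains a unit of `A`, then `t` is integral over `R`. -/
lemma aux_isIntegral_of_mul_mem {R A : Type*} [CommRing R] [CommRing A] [Algebra R A]
    (N : Submodule R A) (hfg : N.FG) (t : A) (ht : ∀ n ∈ N, t * n ∈ N)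
    (a : A) (ha : a ∈ N) (hu : IsUnit a) : IsIntegral R t := by
  have hM : Module.Finite R N := ⟨(Submodule.fg_top _).mpr hfg⟩
  let A' : Subalgebra R A :=
    { carrier := { x | ∀ n ∈ N, x * n ∈ N }
      mul_mem' := fun {p q} hp hq n hn => by
        rw [mul_assoc]; exact hp _ (hq _ hn)
      one_mem' := fun n hn => by rwa [one_mul]
      add_mem' := fun {p q} hp hq n hn => by
        rw [add_mul]; exact N.add_mem (hp _ hn) (hq _ hn)
      zero_mem' := fun n _hn => by rw [zero_mul]; exact N.zero_mem
      algebraMap_mem' := fun r n hn => by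
        rw [← Algebra.smul_def]; exact N.smul_mem r hn }
  have hsmul : ∀ (s : A') (n : A), s.1 • n = s.1 * n := fun _ _ => rfl
  let f : A' →ₐ[R] Module.End R N :=
    AlgHom.ofLinearMap
      { toFun := fun s => (DistribSMul.toLinearMap R A s.1).restrict
          (fun n hn => by simpa using s.2 n hn)
        map_add' := by
          intro p q; ext n
          simp [LinearMap.restrict_apply, add_smul, add_mul]
        map_smul' := by
          intro r s; ext n
          simp [LinearMap.restrict_apply, smul_assoc] }
      (by ext n; simp [LinearMap.restrict_apply])
      (by intro p q; ext n; simp [LinearMap.restrict_apply, mul_smul, mul_assoc])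
  set t' : A' := ⟨t, ht⟩ with ht'
  obtain ⟨p, hp, hp0⟩ := (Algebra.IsIntegral.isIntegral (R := R) (f t') : IsIntegral R (f t'))
  refine ⟨p, hp, ?_⟩
  have h1 : aeval (f t') p = f (aeval t' p) := aeval_algHom_apply f t' p
  have h2 : f (aeval t' p) = 0 := by rw [← h1, aeval_def]; exact hp0
  have h3 : (aeval t' p).1 • a = 0 := by
    have h := congrArg Subtype.val (LinearMap.congr_fun h2 ⟨a, ha⟩)
    simpa [f, LinearMap.restrict_apply] using h
  have h4 : ((aeval t' p : A') : A) = aeval t p := by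
    have := aeval_algHom_apply A'.val t' p
    exact this.symm
  rw [h4, smul_eq_mul] at h3
  rw [← aeval_def]
  exact hu.mul_left_cancel (by rw [mul_comm, h3, mul_zero])

/-- Let `(R, m)` be a one-dimensional Noetherian reduced local ring whose
integral closure `S` (in the total ring of fractions `FractionRing R`) is finitely generated
as an `R`-module, and let `x ∈ m` be a minimal reduction of `m` (i.e. `m^(n+1) = x m^n` for
some `n`).  Then `xS = mS`; in particular `mS` is a principal ideal of `S`. -/
theorem stmt3 (R S : Type*) [CommRing R] [IsLocalRing R] [IsNoetherianRing R] [IsReduced R]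
    (hdim : ringKrullDim R = 1)
    [CommRing S] [Algebra R S] [Algebra S (FractionRing R)]
    [IsScalarTower R S (FractionRing R)]
    [IsIntegralClosure S R (FractionRing R)]
    [Module.Finite R S]
    (x : R) (hx : x ∈ maximalIdeal R)
    (hred : ∃ n : ℕ, maximalIdeal R ^ (n + 1) = Ideal.span {x} * maximalIdeal R ^ n) :
    Ideal.span {algebraMap R S x} = Ideal.map (algebraMap R S) (maximalIdeal R) ∧
    ∃ s : S, Ideal.map (algebraMap R S) (maximalIdeal R) = Ideal.span {s} := by
  obtain ⟨n, hn⟩ := hred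
  set m : Ideal R := maximalIdeal R with hm
  set K := FractionRing R
  -- Step 0: the maximal ideal is not a minimal prime (since dim = 1)
  have hmnotmin : m ∉ (⊥ : Ideal R).minimalPrimes := by
    intro hmin
    have hsub : Subsingleton (PrimeSpectrum R) := by
      constructor
      rintro ⟨p, hp⟩ ⟨q, hq⟩
      have hpm : p = m := le_antisymm (le_maximalIdeal hp.ne_top)
        (hmin.2 ⟨hp, bot_le⟩ (le_maximalIdeal hp.ne_top))
      have hqm : q = m := le_antisymm (le_maximalIdeal hq.ne_top)
        (hmin.2 ⟨hq, bot_le⟩ (le_maximalIdeal hq.ne_top))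
      simp [hpm, hqm]
    have h0 : ringKrullDim R ≤ 0 := Order.krullDim_nonpos_of_subsingleton
    rw [hdim] at h0
    exact absurd h0 (by decide)
  -- Step 1: `x` is a nonzerodivisor
  have hxnz : x ∈ nonZeroDivisors R := by
    rw [mem_nonZeroDivisors_iff_right]
    intro r hr
    have hrp : ∀ p ∈ (⊥ : Ideal R).minimalPrimes, r ∈ p := by
      intro p hp
      have hp' : p.IsPrime := hp.1.1
      have hxp : x ∉ p := by
        intro hxp
        apply hmnotmin
        have hmp : m ≤ p := by
          apply hp'.le_of_pow_le (n := n + 1)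
          rw [hn]
          exact le_trans Ideal.mul_le_left
            ((Ideal.span_singleton_le_iff_mem p).mpr hxp)
        have : p = m := le_antisymm (le_maximalIdeal hp'.ne_top) hmp
        rwa [← this]
      have : r * x ∈ p := hr ▸ p.zero_mem
      exact ((hp'.mem_or_mem this).resolve_right hxp)
    have : r ∈ sInf (⊥ : Ideal R).minimalPrimes := (Submodule.mem_sInf).mpr
      (fun p hp => hrp p hp)
    rw [Ideal.sInf_minimalPrimes] at this
    have h0 : r ∈ nilradical R := this
    rw [nilradical_eq_zero] at h0
    simpa using h0
  have hxu : IsUnit (algebraMap R K x) :=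
    IsLocalization.map_units K (⟨x, hxnz⟩ : nonZeroDivisors R)
  -- Step 2: every element of `m` maps into `xS`
  have key : ∀ y ∈ m, algebraMap R S y ∈ Ideal.span {algebraMap R S x} := by
    intro y hy
    set N : Submodule R K := Submodule.map (Algebra.linearMap R K)
      (Submodule.restrictScalars R (m ^ n)) with hN
    have hfg : N.FG := Submodule.FG.map _
      ((isNoetherian_def.mp inferInstance) _)
    set t : K := (↑hxu.unit⁻¹ : K) * algebraMap R K y with htdef
    have ht : ∀ k ∈ N, t * k ∈ N := by
      rintro k ⟨z, hz, rfl⟩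
      have hyz : y * z ∈ Ideal.span {x} * m ^ n := by
        rw [← hn, pow_succ']
        exact Ideal.mul_mem_mul hy hz
      obtain ⟨w, hw, hxw⟩ := Ideal.mem_span_singleton_mul.mp hyz
      refine ⟨w, hw, ?_⟩
      have : t * algebraMap R K z
          = (↑hxu.unit⁻¹ : K) * algebraMap R K x * algebraMap R K w := by
        rw [htdef]
        rw [mul_assoc, mul_assoc, ← map_mul, ← map_mul, hxw]
      simp only [Algebra.linearMap_apply]
      rw [this, IsUnit.val_inv_mul, one_mul]
    have haN : algebraMap R K (x ^ n) ∈ N :=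
      ⟨x ^ n, Ideal.pow_mem_pow hx n, rfl⟩
    have hau : IsUnit (algebraMap R K (x ^ n)) := by
      rw [map_pow]; exact hxu.pow n
    have hint : IsIntegral R t :=
      aux_isIntegral_of_mul_mem N hfg t ht _ haN hau
    obtain ⟨s, hs⟩ := (IsIntegralClosure.isIntegral_iff (A := S) (B := K)).mp hint
    rw [Ideal.mem_span_singleton]
    refine ⟨s, ?_⟩
    apply IsIntegralClosure.algebraMap_injective S R K
    rw [map_mul, ← IsScalarTower.algebraMap_apply, ← IsScalarTower.algebraMap_apply, hs,
      htdef, ← mul_assoc, IsUnit.mul_val_inv, one_mul]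
  have hle : Ideal.map (algebraMap R S) m ≤ Ideal.span {algebraMap R S x} := by
    rw [Ideal.map_le_iff_le_comap]
    intro y hy
    exact key y hy
  have hge : Ideal.span {algebraMap R S x} ≤ Ideal.map (algebraMap R S) m := by
    rw [Ideal.span_singleton_le_iff_mem]
    exact Ideal.mem_map_of_mem _ hx
  refine ⟨le_antisymm hge hle, ⟨algebraMap R S x, le_antisymm hle hge⟩⟩
end

section
/- Let (R,m) be a one-dimensional Noetherian reduced local ring with finitely generated integral closure S, and x a minimal reduction of m. Then the integral closure of m² satisfies ̄(m²) = m²S ∩ R = x²S ∩ R, and xR ∩ ̄(m²) = xm. -/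
open IsLocalRing Polynomial

/-- The set of elements of `R` that are integral over an ideal `I`: `y` satisfies an equation
`y^n + a₁ y^(n-1) + ⋯ + aₙ = 0` with `aᵢ ∈ I^i`.  (This set is the integral closure `Ī` of the
ideal `I`.) -/
def idealIntCl {R : Type*} [CommRing R] (I : Ideal R) : Set R :=
  {y | ∃ n : ℕ, 0 < n ∧ ∃ a : ℕ → R, (∀ i, 1 ≤ i → i ≤ n → a i ∈ I ^ i) ∧
    y ^ n + ∑ i ∈ Finset.Icc 1 n, a i * y ^ (n - i) = 0}

/-- Determinant trick variant: if `z • N ⊆ N` for a f.g. `R`-submodule `N` of an `R`-algebra `K`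
containing a unit `v`, then `z` is integral over `R`. -/
lemma aux_integral_of_mul_mem {R K : Type*} [CommRing R] [CommRing K] [Algebra R K]
    (N : Submodule R K) (hfg : N.FG) (z v : K) (hv : v ∈ N) (hvu : IsUnit v)
    (hz : ∀ w ∈ N, z * w ∈ N) : IsIntegral R z := by
  haveI : Module.Finite R N := Module.Finite.iff_fg.mpr hfg
  let f : Module.End R N :=
    { toFun := fun w => ⟨z * (w : K), hz _ w.2⟩
      map_add' := fun a b => Subtype.ext (by simp [mul_add])
      map_smul' := fun c a => Subtype.ext (by simp [Algebra.mul_smul_comm]) }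
  obtain ⟨p, hpm, hp0⟩ := LinearMap.exists_monic_and_aeval_eq_zero R f
  have hpow : ∀ (k : ℕ) (w : N), (((f ^ k) w : N) : K) = z ^ k * (w : K) := by
    intro k
    induction k with
    | zero => intro w; simp
    | succ k ih =>
      intro w
      have : (f ^ (k + 1)) w = f ((f ^ k) w) := by
        rw [pow_succ']
        rfl
      rw [this]
      show z * (((f ^ k) w : N) : K) = z ^ (k + 1) * (w : K)
      rw [ih]; ring
  have key : ∀ q : R[X],
      (((Polynomial.aeval f q) ⟨v, hv⟩ : N) : K) = Polynomial.aeval z q * v := by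
    intro q
    induction q using Polynomial.induction_on' with
    | add a b ha hb => rw [map_add, map_add, LinearMap.add_apply, Submodule.coe_add, ha, hb]; ring
    | monomial k c =>
      rw [Polynomial.aeval_monomial, Polynomial.aeval_monomial]
      have : (algebraMap R (Module.End R N)) c * f ^ k = c • (f ^ k) := by
        rw [Algebra.algebraMap_eq_smul_one]
        simp [smul_mul_assoc]
      rw [this, LinearMap.smul_apply, Submodule.coe_smul, hpow]
      rw [Algebra.smul_def]
      ring
  have h0 : Polynomial.aeval z p * v = 0 := by
    rw [← key, hp0]
    simp
  obtain ⟨u, rfl⟩ := hvu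
  have : Polynomial.aeval z p = 0 := (Units.mul_left_eq_zero u).mp h0
  exact ⟨p, hpm, by rwa [Polynomial.aeval_def] at this⟩

/-- Let `(R, m)` be a one-dimensional Noetherian reduced local ring with
finitely generated integral closure `S` (in the total ring of fractions), and `x` a minimal
reduction of `m`.  Then the integral closure of `m²` satisfies
`̄(m²) = m²S ∩ R = x²S ∩ R`, and `xR ∩ ̄(m²) = xm`. -/
theorem stmt6 (R S : Type*) [CommRing R] [IsLocalRing R] [IsNoetherianRing R] [IsReduced R]
    (hdim : ringKrullDim R = 1)
    [CommRing S] [Algebra R S] [Algebra S (FractionRing R)]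
    [IsScalarTower R S (FractionRing R)]
    [IsIntegralClosure S R (FractionRing R)]
    [Module.Finite R S]
    (x : R) (hx : x ∈ maximalIdeal R)
    (hred : ∃ n : ℕ, maximalIdeal R ^ (n + 1) = Ideal.span {x} * maximalIdeal R ^ n) :
    idealIntCl (maximalIdeal R ^ 2)
        = {r : R | algebraMap R S r ∈ Ideal.map (algebraMap R S) (maximalIdeal R ^ 2)} ∧
    idealIntCl (maximalIdeal R ^ 2)
        = {r : R | algebraMap R S r ∈ Ideal.span {algebraMap R S x ^ 2}} ∧
    (↑(Ideal.span {x}) ∩ idealIntCl (maximalIdeal R ^ 2) : Set R)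
        = ↑(Ideal.span {x} * maximalIdeal R) := by
  classical
  set m := maximalIdeal R with hm
  set K := FractionRing R with hK
  set φ := algebraMap R S with hφdef
  set ψ := algebraMap R K with hψdef
  set σ := algebraMap S K with hσdef
  obtain ⟨n, hn⟩ := hred
  have htower : ∀ r : R, σ (φ r) = ψ r := fun r =>
    (IsScalarTower.algebraMap_apply R S K r).symm
  have hψinj : Function.Injective ψ := IsFractionRing.injective R K
  have hσinj : Function.Injective σ := IsIntegralClosure.algebraMap_injective S R K
  have hφinj : Function.Injective φ := by
    intro a b hab
    apply hψinj
    rw [← htower, ← htower, hab]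
  haveI : Algebra.IsIntegral R S := Algebra.IsIntegral.of_finite R S
  -- x is a nonzerodivisor
  have hxnzd : x ∈ nonZeroDivisors R := by
    rw [mem_nonZeroDivisors_iff_right]
    intro y hy
    by_contra hy0
    have hex : ∃ p : Ideal R, p.IsPrime ∧ y ∉ p := by
      by_contra h
      push_neg at h
      have h1 : y ∈ nilradical R := by
        rw [nilradical_eq_sInf]
        exact Submodule.mem_sInf.mpr fun J hJ => h J hJ
      rw [nilradical_eq_zero, Ideal.zero_eq_bot, Ideal.mem_bot] at h1
      exact hy0 h1
    obtain ⟨p, hp, hyp⟩ := hex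
    obtain ⟨q, hq, hqp⟩ := Ideal.exists_minimalPrimes_le (I := (⊥ : Ideal R)) (J := p) bot_le
    have hqprime : q.IsPrime := hq.1.1
    have hxq : x ∈ q := by
      have hyx : y * x ∈ q := by rw [hy]; exact q.zero_mem
      exact (hqprime.mem_or_mem hyx).resolve_left fun h => hyp (hqp h)
    have hmq : m = q := by
      have h1 : m ^ (n + 1) ≤ q := by
        rw [hn]
        exact le_trans Ideal.mul_le_left (Ideal.span_le.mpr (by simpa using hxq))
      have h2 : m ≤ q := Ideal.IsPrime.le_of_pow_le h1
      exact le_antisymm h2 (IsLocalRing.le_maximalIdeal hqprime.ne_top)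
    -- m is then a minimal prime, contradicting dimension one
    have hchain : ∃ a b : PrimeSpectrum R, a < b := by
      by_contra hc
      push_neg at hc
      have hlen : ∀ p : LTSeries (PrimeSpectrum R), p.length = 0 := by
        intro p
        by_contra h
        exact hc _ _ (p.step ⟨0, Nat.pos_of_ne_zero h⟩)
      have hle : ringKrullDim R ≤ 0 := by
        show (⨆ (p : LTSeries (PrimeSpectrum R)), (p.length : WithBot ℕ∞)) ≤ 0
        exact iSup_le fun p => by rw [hlen p]; exact le_refl _
      rw [hdim] at hle
      norm_num at hle
    obtain ⟨a, b, hab⟩ := hchain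
    have ham : a.asIdeal = m := by
      have h1 : a.asIdeal ≤ q := hmq ▸ IsLocalRing.le_maximalIdeal a.2.ne_top
      have h2 : q ≤ a.asIdeal := hq.2 ⟨a.2, bot_le⟩ h1
      rw [hmq]
      exact le_antisymm h1 h2
    have hbm : b.asIdeal = m := by
      have h1 : b.asIdeal ≤ q := hmq ▸ IsLocalRing.le_maximalIdeal b.2.ne_top
      have h2 : q ≤ b.asIdeal := hq.2 ⟨b.2, bot_le⟩ h1
      rw [hmq]
      exact le_antisymm h1 h2
    exact absurd (PrimeSpectrum.ext (ham.trans hbm.symm)) hab.ne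
  -- the image of x in K is a unit
  have hxu : IsUnit (ψ x) := IsLocalization.map_units K (⟨x, hxnzd⟩ : nonZeroDivisors R)
  -- mS = xS
  have hmap : Ideal.map φ m = Ideal.span {φ x} := by
    apply le_antisymm
    · rw [Ideal.map_le_iff_le_comap]
      intro y hy
      show φ y ∈ Ideal.span {φ x}
      set u := hxu.unit with hu
      set z := ψ y * ↑u⁻¹ with hzdef
      set N : Submodule R K := Submodule.map (Algebra.linearMap R K) (m ^ n : Ideal R) with hNdef
      have hNfg : N.FG := (IsNoetherian.noetherian (m ^ n : Ideal R)).map _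
      have hvN : ψ (x ^ n) ∈ N := ⟨x ^ n, Ideal.pow_mem_pow hx n, rfl⟩
      have hvu : IsUnit (ψ (x ^ n)) := by rw [map_pow]; exact hxu.pow n
      have hmul : ∀ w ∈ N, z * w ∈ N := by
        rintro w ⟨t, ht, rfl⟩
        have h1 : y * t ∈ Ideal.span {x} * m ^ n := by
          rw [← hn, pow_succ, mul_comm y t]
          exact Ideal.mul_mem_mul ht hy
        obtain ⟨w', hw', hww⟩ := Ideal.mem_span_singleton_mul.mp h1
        refine ⟨w', hw', ?_⟩
        show ψ w' = z * ψ t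
        have h2 : ψ x * ψ w' = ψ y * ψ t := by rw [← map_mul, ← map_mul, hww]
        rw [hzdef]
        calc ψ w' = (↑u⁻¹ * ↑u) * ψ w' := by rw [u.inv_mul, one_mul]
        _ = ↑u⁻¹ * (ψ x * ψ w') := by rw [mul_assoc, hu, hxu.unit_spec]
        _ = ↑u⁻¹ * (ψ y * ψ t) := by rw [h2]
        _ = ψ y * ↑u⁻¹ * ψ t := by ring
      have hzint : IsIntegral R z :=
        aux_integral_of_mul_mem N hNfg z (ψ (x ^ n)) hvN hvu hmul
      obtain ⟨s, hs⟩ := (IsIntegralClosure.isIntegral_iff (R := R) (A := S) (B := K)).mp hzint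
      refine Ideal.mem_span_singleton.mpr ⟨s, hσinj ?_⟩
      rw [map_mul, htower, htower, hs, hzdef]
      calc ψ y = ψ y * (↑u⁻¹ * ↑u) := by rw [u.inv_mul, mul_one]
      _ = ψ x * (ψ y * ↑u⁻¹) := by rw [hu, hxu.unit_spec]; ring
    · rw [Ideal.span_le, Set.singleton_subset_iff]
      exact Ideal.mem_map_of_mem φ hx
  have hmap2 : Ideal.map φ (m ^ 2) = Ideal.span {φ x ^ 2} := by
    rw [Ideal.map_pow, hmap, Ideal.span_singleton_pow]
  -- the determinant trick: membership in m²S implies integrality over m²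
  have hdet : ∀ y : R, φ y ∈ Ideal.map φ (m ^ 2) → y ∈ idealIntCl (m ^ 2) := by
    intro y hy
    let f : Module.End R S := (Algebra.lmul R S) (φ y)
    have hrange : LinearMap.range f ≤ (m ^ 2) • (⊤ : Submodule R S) := by
      rw [Ideal.smul_top_eq_map]
      rintro _ ⟨t, rfl⟩
      rw [Submodule.restrictScalars_mem]
      show φ y * t ∈ Ideal.map φ (m ^ 2)
      exact Ideal.mul_mem_right t _ hy
    obtain ⟨p, hpm, -, hpc, hp0⟩ :=
      LinearMap.exists_monic_and_coeff_mem_pow_and_aeval_eq_zero_of_range_le_smul R f (m ^ 2)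
        hrange
    have h3 : Polynomial.aeval f p = (Algebra.lmul R S) (φ (Polynomial.eval y p)) := by
      rw [show f = (Algebra.lmul R S) (φ y) from rfl, Polynomial.aeval_algHom_apply,
        Polynomial.aeval_algebraMap_apply_eq_algebraMap_eval]
    have heval : Polynomial.eval y p = 0 := by
      apply hφinj
      rw [map_zero]
      have h2 := congrArg (fun g : Module.End R S => g 1) (h3 ▸ hp0)
      simpa using h2
    set d := p.natDegree with hd
    have hd0 : d ≠ 0 := by
      intro h
      have h1 : p = 1 := (Polynomial.Monic.natDegree_eq_zero hpm).mp h
      rw [h1, Polynomial.eval_one] at heval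
      exact one_ne_zero heval
    refine ⟨d, Nat.pos_of_ne_zero hd0, fun i => p.coeff (d - i), ?_, ?_⟩
    · intro i h1 h2
      have h4 := hpc (d - i)
      have h5 : d - (d - i) = i := by omega
      rwa [h5] at h4
    · have he : Polynomial.eval y p = y ^ d + ∑ k ∈ Finset.range d, p.coeff k * y ^ k := by
        rw [Polynomial.eval_eq_sum_range, Finset.sum_range_succ, hpm.coeff_natDegree, one_mul,
          add_comm]
      have hsum : ∑ i ∈ Finset.Icc 1 d, p.coeff (d - i) * y ^ (d - i)
          = ∑ k ∈ Finset.range d, p.coeff k * y ^ k := by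
        refine Finset.sum_nbij' (fun i => d - i) (fun k => d - k) ?_ ?_ ?_ ?_ ?_
        · intro i hi; simp only [Finset.mem_Icc] at hi; simp only [Finset.mem_range]; omega
        · intro k hk; simp only [Finset.mem_range] at hk; simp only [Finset.mem_Icc]; omega
        · intro i hi; simp only [Finset.mem_Icc] at hi; show d - (d - i) = i; omega
        · intro k hk; simp only [Finset.mem_range] at hk; show d - (d - k) = k; omega
        · intro i hi; rfl
      rw [hsum, ← he]
      exact heval
  -- integral over m² implies membership in x²S
  have hup : ∀ y : R, y ∈ idealIntCl (m ^ 2) → φ y ∈ Ideal.span {φ x ^ 2} := by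
    intro y hy
    obtain ⟨N', hN'pos, a, ha, heq⟩ := hy
    set u := hxu.unit with hu
    set z := ψ y * (↑u⁻¹ : K) ^ 2 with hzdef
    have hai : ∀ i, ∃ s : S, (1 ≤ i ∧ i ≤ N') → φ (a i) = φ x ^ (2 * i) * s := by
      intro i
      by_cases hir : 1 ≤ i ∧ i ≤ N'
      · have h3 : a i ∈ m ^ (2 * i) := by
          have h6 := ha i hir.1 hir.2
          rwa [← pow_mul] at h6
        have h4 : φ (a i) ∈ Ideal.span {φ x ^ (2 * i)} := by
          have h5 : Ideal.map φ (m ^ (2 * i)) = Ideal.span {φ x ^ (2 * i)} := by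
            rw [Ideal.map_pow, hmap, Ideal.span_singleton_pow]
          rw [← h5]
          exact Ideal.mem_map_of_mem φ h3
        obtain ⟨s, hs⟩ := Ideal.mem_span_singleton.mp h4
        exact ⟨s, fun _ => hs⟩
      · exact ⟨0, fun h => absurd h hir⟩
    choose s hs using hai
    have hzu : z * (↑u : K) ^ 2 = ψ y := by
      calc ψ y * (↑u⁻¹ : K) ^ 2 * (↑u : K) ^ 2 = ψ y * ((↑u⁻¹ : K) * ↑u) ^ 2 := by ring
      _ = ψ y := by rw [u.inv_mul, one_pow, mul_one]
    have hA : (z ^ N' + ∑ i ∈ Finset.Icc 1 N', σ (s i) * z ^ (N' - i)) * (↑u : K) ^ (2 * N')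
        = 0 := by
      rw [add_mul, Finset.sum_mul]
      have h1 : z ^ N' * (↑u : K) ^ (2 * N') = ψ y ^ N' := by
        rw [pow_mul, ← mul_pow, hzu]
      have h2 : ∀ i ∈ Finset.Icc 1 N',
          σ (s i) * z ^ (N' - i) * (↑u : K) ^ (2 * N') = ψ (a i * y ^ (N' - i)) := by
        intro i hi
        obtain ⟨hi1, hi2⟩ := Finset.mem_Icc.mp hi
        have e2 : ψ (a i) = ψ x ^ (2 * i) * σ (s i) := by
          have h7 := congrArg σ (hs i ⟨hi1, hi2⟩)
          rwa [map_mul, map_pow, htower, htower] at h7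
        have hzexp : z ^ (N' - i) * ((↑u : K) ^ 2) ^ (N' - i) = ψ y ^ (N' - i) := by
          rw [← mul_pow, hzu]
        have hupow : (↑u : K) ^ (2 * N') = ((↑u : K) ^ 2) ^ (N' - i) * ((↑u : K) ^ 2) ^ i := by
          rw [← pow_add, ← pow_mul]
          congr 1
          omega
        have hux : ((↑u : K) ^ 2) ^ i = ψ x ^ (2 * i) := by
          rw [hu, hxu.unit_spec, ← pow_mul]
        rw [hupow]
        calc σ (s i) * z ^ (N' - i) * (((↑u : K) ^ 2) ^ (N' - i) * ((↑u : K) ^ 2) ^ i)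
            = σ (s i) * (z ^ (N' - i) * ((↑u : K) ^ 2) ^ (N' - i)) * ((↑u : K) ^ 2) ^ i := by
              ring
        _ = σ (s i) * ψ y ^ (N' - i) * ψ x ^ (2 * i) := by rw [hzexp, hux]
        _ = ψ x ^ (2 * i) * σ (s i) * ψ y ^ (N' - i) := by ring
        _ = ψ (a i) * ψ y ^ (N' - i) := by rw [← e2]
        _ = ψ (a i * y ^ (N' - i)) := by rw [map_mul, map_pow]
      rw [h1, Finset.sum_congr rfl h2, ← map_pow, ← map_sum, ← map_add, heq, map_zero]
    have hAz : z ^ N' + ∑ i ∈ Finset.Icc 1 N', σ (s i) * z ^ (N' - i) = 0 := by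
      refine (Units.mul_left_eq_zero (u ^ (2 * N'))).mp ?_
      rw [Units.val_pow_eq_pow_val]
      exact hA
    have hdeg : (∑ i ∈ Finset.Icc 1 N', Polynomial.C (s i) * Polynomial.X ^ (N' - i)).degree
        < (N' : WithBot ℕ) := by
      apply lt_of_le_of_lt (Polynomial.degree_sum_le _ _)
      rw [Finset.sup_lt_iff (by exact_mod_cast WithBot.bot_lt_coe N')]
      intro i hi
      obtain ⟨hi1, hi2⟩ := Finset.mem_Icc.mp hi
      apply lt_of_le_of_lt (Polynomial.degree_C_mul_X_pow_le _ _)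
      have h8 : N' - i < N' := by omega
      exact_mod_cast h8
    have hzS : IsIntegral S z := by
      refine ⟨Polynomial.X ^ N' + ∑ i ∈ Finset.Icc 1 N', Polynomial.C (s i) *
        Polynomial.X ^ (N' - i), Polynomial.monic_X_pow_add hdeg, ?_⟩
      rw [Polynomial.eval₂_add, Polynomial.eval₂_pow, Polynomial.eval₂_X,
        Polynomial.eval₂_finset_sum]
      simp only [Polynomial.eval₂_mul, Polynomial.eval₂_C, Polynomial.eval₂_pow,
        Polynomial.eval₂_X]
      exact hAz
    have hzR : IsIntegral R z := isIntegral_trans z hzS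
    obtain ⟨t, ht⟩ := (IsIntegralClosure.isIntegral_iff (R := R) (A := S) (B := K)).mp hzR
    refine Ideal.mem_span_singleton.mpr ⟨t, hσinj ?_⟩
    rw [map_mul, map_pow, htower, ht, htower]
    calc ψ y = ψ y * ((↑u⁻¹ : K) * ↑u) ^ 2 := by rw [u.inv_mul, one_pow, mul_one]
    _ = ψ x ^ 2 * z := by rw [hzdef, hu, hxu.unit_spec]; ring
  -- xS ∩ R = m
  have hcontr : ∀ r : R, φ r ∈ Ideal.span {φ x} → r ∈ m := by
    intro r hr
    by_contra hrm
    have hru : IsUnit r := by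
      by_contra h
      rw [hm, IsLocalRing.mem_maximalIdeal] at hrm
      exact hrm (mem_nonunits_iff.mpr h)
    have h1 : Ideal.map φ m = ⊤ := by
      rw [hmap]
      exact Ideal.eq_top_of_isUnit_mem _ hr (hru.map φ)
    have h2 : m = ⊤ := by
      rw [← Ideal.map_eq_top_iff_of_ker_le φ (le_trans (le_of_eq
        ((RingHom.injective_iff_ker_eq_bot φ).mp hφinj)) bot_le)
        (Algebra.isIntegral_def.mp ‹Algebra.IsIntegral R S›)]
      exact h1
    exact (IsLocalRing.maximalIdeal.isMaximal R).ne_top h2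
  -- x is a nonzerodivisor on S
  have hxS : ∀ s t : S, φ x * s = φ x * t → s = t := by
    intro s t hst
    apply hσinj
    have : σ (φ x) * σ s = σ (φ x) * σ t := by rw [← map_mul, ← map_mul, hst]
    rw [htower] at this
    exact hxu.mul_left_cancel this
  refine ⟨?_, ?_, ?_⟩
  · ext y
    constructor
    · intro hy
      simp only [Set.mem_setOf_eq, hmap2]
      exact hup y hy
    · intro hy
      exact hdet y hy
  · ext y
    constructor
    · intro hy
      exact hup y hy
    · intro hy
      exact hdet y (by rw [hmap2]; exact hy)
  · ext y
    constructor
    · rintro ⟨hy1, hy2⟩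
      obtain ⟨r, rfl⟩ := Ideal.mem_span_singleton.mp hy1
      have h2 := hup _ hy2
      obtain ⟨c, hc⟩ := Ideal.mem_span_singleton.mp h2
      have : φ r = φ x * c := by
        apply hxS
        rw [← map_mul, hc, sq, mul_assoc]
      have hrm : r ∈ m := by
        apply hcontr
        rw [this]
        exact Ideal.mul_mem_right _ _ (Ideal.mem_span_singleton_self _)
      exact Ideal.mul_mem_mul (Ideal.mem_span_singleton_self x) hrm
    · intro hy
      constructor
      · exact Ideal.mul_le_left hy
      · apply hdet
        rw [hmap2]
        have : Ideal.map φ (Ideal.span {x} * m) ≤ Ideal.span {φ x ^ 2} := by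
          rw [Ideal.map_mul, Ideal.map_span, hmap, Set.image_singleton,
            Ideal.span_singleton_mul_span_singleton, ← sq]
        exact this (Ideal.mem_map_of_mem φ hy)
end
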